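/- arXiv:1704.00705 — 4 statements merged into one kernel-verified Lean document; each statement's English description precedes it below -/
import Mathlib

section
/- Let G be a DAG partitioned into blocks V₁,…,V_k such that the quotient graph is acyclic and the blocks are topologically ordered (every edge of the quotient graph goes from a smaller to a larger index). If v ∈ V_i has no outgoing edge to a vertex in V_i (i.e., C_out(v,i) = 0), then moving v from V_i to V_{i+1} keeps the quotient graph acyclic. -/
/-- If the blocks are topologically ordered and `v ∈ V_i` has no outgoing edge into `V_i`,
then moving `v` to `V_{i+1}` keeps the quotient graph acyclic. -/
theorem stmt_1 {V : Type*} [DecidableEq V] (E : V → V → Prop) (k : ℕ) (part : V → Fin k)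
    (hdag : ∀ v, ¬ Relation.TransGen E v v)
    (htopo : ∀ u w, E u w → part u ≤ part w)
    (v : V) (i : Fin k) (hv : part v = i) (hi : i.val + 1 < k)
    (hout : ∀ w, E v w → part w ≠ i) :
    ∀ x : Fin k, ¬ Relation.TransGen
      (fun a b : Fin k => a ≠ b ∧ ∃ u w, E u w ∧
        Function.update part v ⟨i.val + 1, hi⟩ u = a ∧
        Function.update part v ⟨i.val + 1, hi⟩ w = b) x x := by
  set i' : Fin k := ⟨i.val + 1, hi⟩ with hi'
  have hle : ∀ a b : Fin k, (a ≠ b ∧ ∃ u w, E u w ∧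
      Function.update part v i' u = a ∧ Function.update part v i' w = b) → a < b := by
    rintro a b ⟨hne, u, w, hE, rfl, rfl⟩
    have hab : Function.update part v i' u ≤ Function.update part v i' w := by
      by_cases hu : u = v
      · subst hu
        by_cases hw : w = u
        · exact absurd (Relation.TransGen.single (hw ▸ hE)) (hdag u)
        · rw [Function.update_self, Function.update_of_ne hw]
          have h1 : i ≤ part w := hv ▸ htopo u w hE
          have h2 : part w ≠ i := hout w hE
          have : (i : Fin k) < part w := lt_of_le_of_ne h1 (Ne.symm h2)
          exact Fin.mk_le_of_le_val this
      · rw [Function.update_of_ne hu]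
        by_cases hw : w = v
        · subst hw
          rw [Function.update_self]
          have h1 : part u ≤ i := hv ▸ htopo u w hE
          exact le_trans h1 (le_of_lt (by exact Fin.mk_lt_of_lt_val (Nat.lt_succ_self _)))
        · rw [Function.update_of_ne hw]; exact htopo u w hE
    exact lt_of_le_of_ne hab hne
  intro x hx
  have := Relation.TransGen.mono hle x x hx
  rw [Relation.transGen_eq_self (r := (LT.lt : Fin k → Fin k → Prop))] at this
  exact lt_irrefl x this
end

section
/- Let G be a DAG partitioned into blocks V₁,…,V_k topologically ordered. If v ∈ V_i has no incoming edge from a vertex in V_i (i.e., C_in(v,i) = 0), then moving v from V_i to V_{i-1} (for i ≥ 2) keeps the quotient graph acyclic. -/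
/-- If the blocks are topologically ordered and `v ∈ V_i` has no incoming edge from `V_i`,
then moving `v` to `V_{i-1}` (for `i ≥ 2`, i.e. `1 ≤ i.val` here) keeps the quotient graph
acyclic. -/
theorem stmt_2 {V : Type*} [DecidableEq V] (E : V → V → Prop) (k : ℕ) (part : V → Fin k)
    (hdag : ∀ v, ¬ Relation.TransGen E v v)
    (htopo : ∀ u w, E u w → part u ≤ part w)
    (v : V) (i : Fin k) (hv : part v = i) (hi : 1 ≤ i.val)
    (hin : ∀ u, E u v → part u ≠ i) :
    ∀ x : Fin k, ¬ Relation.TransGen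
      (fun a b : Fin k => a ≠ b ∧ ∃ u w, E u w ∧
        Function.update part v ⟨i.val - 1, lt_of_le_of_lt (Nat.sub_le _ _) i.isLt⟩ u = a ∧
        Function.update part v ⟨i.val - 1, lt_of_le_of_lt (Nat.sub_le _ _) i.isLt⟩ w = b) x x := by
  intro x hx
  set j : Fin k := ⟨i.val - 1, lt_of_le_of_lt (Nat.sub_le _ _) i.isLt⟩ with hj
  set p := Function.update part v j with hp
  have hmono : ∀ u w, E u w → p u ≤ p w := by
    intro u w huw
    by_cases hu : u = v <;> by_cases hw : w = v
    · subst hu; subst hw; exact absurd (Relation.TransGen.single huw) (hdag _)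
    · simp only [hp, hu, Function.update_self, Function.update_of_ne hw]
      have h1 : (i : Fin k) ≤ part w := by
        have := htopo u w huw; rw [hu, hv] at this; exact this
      calc j ≤ i := by simp [hj, Fin.le_def, Nat.sub_le]
        _ ≤ part w := h1
    · simp only [hp, hw, Function.update_self, Function.update_of_ne hu]
      have h1 : part u ≤ i := by
        have := htopo u w huw; rw [hw, hv] at this; exact this
      have h2 : part u ≠ i := hin u (hw ▸ huw)
      have : (part u).val < i.val := lt_of_le_of_ne (Fin.le_def.mp h1) (fun h => h2 (Fin.ext h))
      simp only [Fin.le_def, hj]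
      omega
    · simpa [hp, Function.update_of_ne hu, Function.update_of_ne hw] using htopo u w huw
  have key : ∀ a b : Fin k, (a ≠ b ∧ ∃ u w, E u w ∧ p u = a ∧ p w = b) → a < b := by
    rintro a b ⟨hne, u, w, huw, rfl, rfl⟩
    exact lt_of_le_of_ne (hmono u w huw) hne
  have hlt : x < x := by
    have := Relation.TransGen.mono key _ _ hx
    rwa [Relation.transGen_eq_self (r := fun a b : Fin k => a < b)] at this
  exact lt_irrefl x hlt
end

section
/- The DGPAQ decision problem restricted to k = 2 and ε = 0 is NP-hard: the subset sum (partition) problem many-one reduces to it. Concretely: given positive integers a₁,…,a_n, construct the DAG G with vertex set {s, t, v₁,…,v_n}, edges (s, v_i) and (v_i, t) for all i, node weights c(s) = c(t) = A := Σᵢ 2aᵢ and c(vᵢ) = 2aᵢ. Then there exists a subset I ⊆ {1,…,n} with Σ_{i∈I} aᵢ = Σ_{i∉I} aᵢ if and only if G admits a partition into two blocks V₁, V₂ each of weight exactly 3A/2 whose quotient graph is acyclic. -/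
/-- NP-hardness reduction: the subset-sum (partition) instance `a₁,…,a_n` has a solution iff the
constructed DAG (vertices `s = Sum.inr false`, `t = Sum.inr true`, `vᵢ = Sum.inl i`; edges
`(s,vᵢ)` and `(vᵢ,t)`; weights `c(s) = c(t) = A = ∑ 2aᵢ`, `c(vᵢ) = 2aᵢ`) admits a bipartition
into blocks `S`, `Sᶜ` of weight exactly `3A/2` each with acyclic quotient graph. -/
theorem stmt_8 (n : ℕ) (a : Fin n → ℕ) (ha : ∀ i, 0 < a i)
    (A : ℕ) (hA : A = ∑ i, 2 * a i)
    (c : Fin n ⊕ Bool → ℕ)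
    (hcv : ∀ i, c (Sum.inl i) = 2 * a i)
    (hcs : c (Sum.inr false) = A) (hct : c (Sum.inr true) = A)
    (E : (Fin n ⊕ Bool) → (Fin n ⊕ Bool) → Prop)
    (hE : ∀ u v, E u v ↔
      ((u = Sum.inr false ∧ ∃ i, v = Sum.inl i) ∨ ((∃ i, u = Sum.inl i) ∧ v = Sum.inr true))) :
    (∃ I : Finset (Fin n), ∑ i ∈ I, a i = ∑ i ∈ Iᶜ, a i) ↔
    (∃ S : Finset (Fin n ⊕ Bool),
      2 * (∑ v ∈ S, c v) = 3 * A ∧ 2 * (∑ v ∈ Sᶜ, c v) = 3 * A ∧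
      ¬((∃ u ∈ S, ∃ v, v ∉ S ∧ E u v) ∧ (∃ u, u ∉ S ∧ ∃ v ∈ S, E u v))) := by
  -- key formula for the weight of any block
  have key : ∀ S : Finset (Fin n ⊕ Bool),
      ∑ v ∈ S, c v = 2 * (∑ i ∈ S.toLeft, a i) + S.toRight.card * A := by
    intro S
    conv_lhs => rw [← Finset.toLeft_disjSum_toRight (u := S)]
    rw [Finset.sum_disjSum]
    congr 1
    · rw [Finset.mul_sum]; exact Finset.sum_congr rfl fun i _ => hcv i
    · rw [Finset.sum_congr rfl (fun b _ => show c (Sum.inr b) = A by cases b <;> assumption),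
        Finset.sum_const, smul_eq_mul]
  have hAsum : A = 2 * ∑ i, a i := by rw [hA, Finset.mul_sum]
  constructor
  · rintro ⟨I, hI⟩
    refine ⟨I.disjSum {false}, ?_, ?_, ?_⟩
    · rw [key]
      have h1 : (I.disjSum {false}).toLeft = I := by
        ext i; simp
      have h2 : (I.disjSum {false}).toRight = {false} := by
        ext b; simp
      have htot : ∑ i ∈ I, a i + ∑ i ∈ Iᶜ, a i = ∑ i, a i :=
        Finset.sum_add_sum_compl I a
      rw [h1, h2]
      simp only [Finset.card_singleton, one_mul]
      omega
    · have htotal : ∑ v, c v = 3 * A := by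
        rw [key]
        have hl : (Finset.univ : Finset (Fin n ⊕ Bool)).toLeft = Finset.univ := by ext i; simp
        have hr : (Finset.univ : Finset (Fin n ⊕ Bool)).toRight = Finset.univ := by ext b; simp
        rw [hl, hr]
        simp only [Finset.card_univ, Fintype.card_bool]
        omega
      have h1 : 2 * ∑ v ∈ I.disjSum {false}, c v = 3 * A := by
        rw [key]
        have h1 : (I.disjSum {false}).toLeft = I := by ext i; simp
        have h2 : (I.disjSum {false}).toRight = {false} := by ext b; simp
        have htot : ∑ i ∈ I, a i + ∑ i ∈ Iᶜ, a i = ∑ i, a i :=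
          Finset.sum_add_sum_compl I a
        rw [h1, h2]
        simp only [Finset.card_singleton, one_mul]
        omega
      have h2 : ∑ v ∈ (I.disjSum {false})ᶜ, c v + ∑ v ∈ I.disjSum {false}, c v = ∑ v, c v :=
        Finset.sum_compl_add_sum _ c
      omega
    · rintro ⟨-, u, hu, v, hv, huv⟩
      rw [hE] at huv
      rcases huv with ⟨rfl, -⟩ | ⟨-, rfl⟩
      · exact hu (by simp)
      · simp at hv
  · rintro ⟨S, hS1, hS2, -⟩
    refine ⟨S.toLeft, ?_⟩
    rw [key] at hS1 hS2
    have hcl : Sᶜ.toLeft = S.toLeftᶜ := by ext i; simp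
    have hcr : Sᶜ.toRight = S.toRightᶜ := by ext b; simp
    rw [hcl, hcr] at hS2
    have hcard : S.toRight.card + S.toRightᶜ.card = 2 := by
      rw [Finset.card_add_card_compl, Fintype.card_bool]
    have htot : ∑ i ∈ S.toLeft, a i + ∑ i ∈ S.toLeftᶜ, a i = ∑ i, a i :=
      Finset.sum_add_sum_compl S.toLeft a
    have hb : S.toRight.card ≤ 2 := by omega
    interval_cases h : S.toRight.card <;> omega
end

section
/- Let G be the disjoint union of directed cliques on vertex sets S₁,…,S_n with |Sᵢ| = aᵢ, all vertex weights 1, and suppose Σᵢ aᵢ = kA with A/4 < aᵢ < A/2 for all i. Then G admits a partition into k blocks, each of weight exactly A, with zero cut edges and acyclic quotient graph, if and only if the multiset {a₁,…,a_n} can be partitioned into k triples each summing to A. -/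
lemma card_fiber_aux {n k : ℕ} (a : Fin n → ℕ) (g : Fin n → Fin k) (j : Fin k) :
    (Finset.univ.filter (fun x : Σ i : Fin n, Fin (a i) => g x.1 = j)).card
      = ∑ i ∈ Finset.univ.filter (fun i => g i = j), a i := by
  have h : Finset.univ.filter (fun x : Σ i : Fin n, Fin (a i) => g x.1 = j)
      = (Finset.univ.filter (fun i => g i = j)).sigma (fun i => Finset.univ) := by
    ext x
    simp [Finset.mem_sigma]
  rw [h, Finset.card_sigma]
  simp

/-- 3-Partition reduction: the disjoint union of directed cliques `S₁,…,S_n` with `|Sᵢ| = aᵢ`,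
unit vertex weights, `∑ aᵢ = kA` and `A/4 < aᵢ < A/2`, admits a partition into `k` blocks of
weight exactly `A` with zero cut edges (and hence acyclic quotient graph) iff the numbers
`a₁,…,a_n` can be partitioned into `k` triples each summing to `A`. -/
theorem stmt_13 (k A : ℕ) (hA : 0 < A) (n : ℕ) (hn : n = 3 * k)
    (a : Fin n → ℕ)
    (hbound : ∀ i, A < 4 * a i ∧ 2 * a i < A)
    (hsum : ∑ i, a i = k * A) :
    (∃ part : (Σ i : Fin n, Fin (a i)) → Fin k,
      (∀ j : Fin k, (Finset.univ.filter (fun x : Σ i : Fin n, Fin (a i) => part x = j)).card = A) ∧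
      (∀ x y : Σ i : Fin n, Fin (a i), (x.1 = y.1 ∧ x.2.val < y.2.val) → part x = part y) ∧
      (∀ j : Fin k, ¬ Relation.TransGen
        (fun p q : Fin k => p ≠ q ∧ ∃ x y : Σ i : Fin n, Fin (a i),
          (x.1 = y.1 ∧ x.2.val < y.2.val) ∧ part x = p ∧ part y = q) j j)) ↔
    (∃ f : Fin n → Fin k, ∀ j : Fin k,
      (Finset.univ.filter (fun i => f i = j)).card = 3 ∧
      ∑ i ∈ Finset.univ.filter (fun i => f i = j), a i = A) := by
  have h0 : ∀ i, 0 < a i := fun i => by have := (hbound i).1; omega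
  constructor
  · rintro ⟨part, hcard, hmono, -⟩
    refine ⟨fun i => part ⟨i, ⟨0, h0 i⟩⟩, fun j => ?_⟩
    set f : Fin n → Fin k := fun i => part ⟨i, ⟨0, h0 i⟩⟩ with hf
    have hconst : ∀ x : Σ i : Fin n, Fin (a i), part x = f x.1 := by
      rintro ⟨i, v⟩
      rcases Nat.eq_zero_or_pos v.val with h | h
      · have : v = ⟨0, h0 i⟩ := Fin.ext h
        rw [this]
      · exact (hmono ⟨i, ⟨0, h0 i⟩⟩ ⟨i, v⟩ ⟨rfl, h⟩).symm
    have hsumA : ∑ i ∈ Finset.univ.filter (fun i => f i = j), a i = A := by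
      rw [← card_fiber_aux a f j, ← hcard j]
      congr 1
      apply Finset.filter_congr
      intro x _
      rw [hconst x]
    refine ⟨?_, hsumA⟩
    set s := Finset.univ.filter (fun i => f i = j) with hs
    set m := s.card with hm
    have h4 : m * (A + 1) ≤ 4 * A := by
      calc m * (A + 1) = ∑ _i ∈ s, (A + 1) := by rw [Finset.sum_const, smul_eq_mul]
        _ ≤ ∑ i ∈ s, 4 * a i := Finset.sum_le_sum (fun i _ => (hbound i).1)
        _ = 4 * ∑ i ∈ s, a i := by rw [Finset.mul_sum]
        _ = 4 * A := by rw [hsumA]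
    have h2 : 2 * A + m ≤ m * A := by
      calc 2 * A + m = ∑ i ∈ s, (2 * a i + 1) := by
            rw [Finset.sum_add_distrib, ← Finset.mul_sum, hsumA, Finset.sum_const, smul_eq_mul,
              mul_one]
        _ ≤ ∑ _i ∈ s, A := Finset.sum_le_sum (fun i _ => (hbound i).2)
        _ = m * A := by rw [Finset.sum_const, smul_eq_mul]
    have hm3 : m ≤ 3 := by nlinarith
    interval_cases m <;> omega
  · rintro ⟨f, hf⟩
    refine ⟨fun x => f x.1, fun j => ?_, fun x y h => congrArg f h.1, fun j hT => ?_⟩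
    · rw [card_fiber_aux a f j]
      exact (hf j).2
    · have hR : ∀ p q : Fin k, ¬ (p ≠ q ∧ ∃ x y : Σ i : Fin n, Fin (a i),
          (x.1 = y.1 ∧ x.2.val < y.2.val) ∧ f x.1 = p ∧ f y.1 = q) := by
        rintro p q ⟨hne, x, y, ⟨h1, -⟩, hx, hy⟩
        exact hne (hx ▸ hy ▸ congrArg f h1)
      cases hT with
      | single h => exact hR _ _ h
      | tail _ h => exact hR _ _ h
end
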